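/- Let f : ℝⁿ → ℝ be twice continuously differentiable on an open set containing Ω and convex on Ω, and define g := f + Γ_Δ on Ω. Then for every x ∈ Ω and every v ∈ ℝⁿ, the second directional derivative satisfies D²g(x)[v,v] ≥ (2/Δ²)·‖v‖₂². Equivalently, the smallest eigenvalue of the Hessian ∇²g(x) is at least 2/Δ² for every x ∈ Ω. -/

import Mathlib

open Filter Set

/-- If `ψ` is monotone on a neighborhood of `0` and has derivative `d` at `0`, then `0 ≤ d`. -/
lemma aux_deriv_nonneg {ψ : ℝ → ℝ} {d : ℝ} {I : Set ℝ}
    (hI : I ∈ nhds (0:ℝ)) (hmono : MonotoneOn ψ I) (hψ : HasDerivAt ψ d 0) : 0 ≤ d := by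
  rw [hasDerivAt_iff_tendsto_slope] at hψ
  have h0 : (0:ℝ) ∈ I := mem_of_mem_nhds hI
  have hle : Tendsto (slope ψ 0) (nhdsWithin 0 (Set.Ioi 0)) (nhds d) :=
    hψ.mono_left (nhdsWithin_mono 0 (fun t ht => Set.mem_compl_singleton_iff.mpr (ne_of_gt ht)))
  refine ge_of_tendsto hle ?_
  filter_upwards [self_mem_nhdsWithin, mem_nhdsWithin_of_mem_nhds hI] with t ht htI
  have hψle : ψ 0 ≤ ψ t := hmono h0 htI (le_of_lt ht)
  have ht0 : (0:ℝ) < t := ht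
  rw [slope_def_field]
  apply div_nonneg <;> linarith

/-- Derivative of a function along a line. -/
lemma aux_hasDerivAt_line {E : Type*} [NormedAddCommGroup E] [NormedSpace ℝ E]
    {F : E → ℝ} {x v : E} {t : ℝ} (hF : DifferentiableAt ℝ F (x + t • v)) :
    HasDerivAt (fun s : ℝ => F (x + s • v)) (fderiv ℝ F (x + t • v) v) t := by
  have hL : HasDerivAt (fun s : ℝ => x + s • v) v t := by
    simpa using ((hasDerivAt_id t).smul_const v).const_add x
  simpa [Function.comp_def] using hF.hasFDerivAt.comp_hasDerivAt t hL

/-- Second derivative of a function along a line, evaluated at the base point. -/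
lemma aux_hasDerivAt_line2 {E : Type*} [NormedAddCommGroup E] [NormedSpace ℝ E]
    {F : E → ℝ} {x : E} (v : E) (hF : ContDiffAt ℝ 2 F x) :
    HasDerivAt (fun s : ℝ => fderiv ℝ F (x + s • v) v) (fderiv ℝ (fderiv ℝ F) x v v) 0 := by
  have h1 : ContDiffAt ℝ 1 (fderiv ℝ F) x := hF.fderiv_right (by norm_num)
  have h2 : HasFDerivAt (fderiv ℝ F) (fderiv ℝ (fderiv ℝ F) x) x :=
    (h1.differentiableAt one_ne_zero).hasFDerivAt
  have hL : HasDerivAt (fun s : ℝ => x + s • v) v 0 := by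
    simpa using ((hasDerivAt_id (0:ℝ)).smul_const v).const_add x
  have h2' : HasFDerivAt (fderiv ℝ F) (fderiv ℝ (fderiv ℝ F) x) (x + (0:ℝ) • v) := by
    simpa using h2
  have h3 : HasDerivAt (fun s : ℝ => fderiv ℝ F (x + s • v)) (fderiv ℝ (fderiv ℝ F) x v) 0 :=
    h2'.comp_hasDerivAt 0 hL
  have h4 := h3.clm_apply (hasDerivAt_const (0:ℝ) v)
  simpa using h4

/-- The second iterated derivative in direction `(v,v)` equals the second derivative along the
line `t ↦ x + t • v`. -/
lemma aux_line {E : Type*} [NormedAddCommGroup E] [NormedSpace ℝ E] {g : E → ℝ}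
    {W : Set E} (hW : IsOpen W) {x : E} (hx : x ∈ W) (hg : ContDiffOn ℝ 2 g W) (v : E) :
    iteratedFDeriv ℝ 2 g x ![v, v] = deriv (deriv (fun t : ℝ => g (x + t • v))) 0 := by
  rw [iteratedFDeriv_two_apply]
  have hc : Continuous (fun t : ℝ => x + t • v) := by continuity
  have hx0 : x + (0:ℝ) • v ∈ W := by simpa using hx
  have hN : (fun t : ℝ => x + t • v) ⁻¹' W ∈ nhds (0:ℝ) :=
    hc.continuousAt.preimage_mem_nhds (hW.mem_nhds hx0)
  have hder : deriv (fun s : ℝ => g (x + s • v)) =ᶠ[nhds (0:ℝ)]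
      fun t => fderiv ℝ g (x + t • v) v := by
    filter_upwards [hN] with t ht
    exact (aux_hasDerivAt_line
      ((hg.contDiffAt (hW.mem_nhds ht)).differentiableAt two_ne_zero)).deriv
  have hψ := aux_hasDerivAt_line2 v (hg.contDiffAt (hW.mem_nhds hx))
  have H : HasDerivAt (deriv (fun t : ℝ => g (x + t • v))) (fderiv ℝ (fderiv ℝ g) x v v) 0 :=
    hψ.congr_of_eventuallyEq hder
  rw [H.deriv]
  simp

/-- With `Γ_Δ(x) = -Σⱼ (log(Δ+xⱼ) + log(Δ-xⱼ))` on `Ω = B ∩ S`, if `f` is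
twice continuously differentiable on an open set containing `Ω` and convex on `Ω`, then
`g := f + Γ_Δ` satisfies `D²g(x)[v,v] ≥ (2/Δ²)·‖v‖₂²` for all `x ∈ Ω` and `v ∈ ℝⁿ`. -/
theorem stmt_4 (n : ℕ) (xL xR : EuclideanSpace ℝ (Fin n)) (Δ : ℝ) (hΔ : 0 < Δ)
    (B S Ω : Set (EuclideanSpace ℝ (Fin n)))
    (hB : B = {x | ∀ j, xL j < x j ∧ x j < xR j})
    (hS : S = {x | ∀ j, -Δ < x j ∧ x j < Δ})
    (hΩ : Ω = B ∩ S) (hne : Ω.Nonempty)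
    (ΓΔ : EuclideanSpace ℝ (Fin n) → ℝ)
    (hΓΔ : ∀ x, ΓΔ x = -∑ j, (Real.log (Δ + x j) + Real.log (Δ - x j)))
    (f : EuclideanSpace ℝ (Fin n) → ℝ)
    (U : Set (EuclideanSpace ℝ (Fin n))) (hU : IsOpen U) (hΩU : Ω ⊆ U)
    (hf : ContDiffOn ℝ 2 f U) (hconv : ConvexOn ℝ Ω f) :
    ∀ x ∈ Ω, ∀ v : EuclideanSpace ℝ (Fin n),
      (2 / Δ ^ 2) * ‖v‖ ^ 2 ≤ iteratedFDeriv ℝ 2 (fun y => f y + ΓΔ y) x ![v, v] := by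
  intro x hx v
  have hxBS : x ∈ B ∩ S := hΩ ▸ hx
  have hxS : x ∈ S := hxBS.2
  have hxU : x ∈ U := hΩU hx
  -- openness of B, S, Ω
  have hSopen : IsOpen S := by
    rw [hS]
    have : {y : EuclideanSpace ℝ (Fin n) | ∀ j, -Δ < y j ∧ y j < Δ} =
        ⋂ j, (fun y : EuclideanSpace ℝ (Fin n) => y j) ⁻¹' Set.Ioo (-Δ) Δ := by
      ext y; simp [Set.mem_Ioo]
    rw [this]
    exact isOpen_iInter_of_finite fun j => isOpen_Ioo.preimage
      (EuclideanSpace.proj j : EuclideanSpace ℝ (Fin n) →L[ℝ] ℝ).continuous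
  have hBopen : IsOpen B := by
    rw [hB]
    have : {y : EuclideanSpace ℝ (Fin n) | ∀ j, xL j < y j ∧ y j < xR j} =
        ⋂ j, (fun y : EuclideanSpace ℝ (Fin n) => y j) ⁻¹' Set.Ioo (xL j) (xR j) := by
      ext y; simp [Set.mem_Ioo]
    rw [this]
    exact isOpen_iInter_of_finite fun j => isOpen_Ioo.preimage
      (EuclideanSpace.proj j : EuclideanSpace ℝ (Fin n) →L[ℝ] ℝ).continuous
  have hΩopen : IsOpen Ω := hΩ ▸ hBopen.inter hSopen
  have hΩS : Ω ⊆ S := by rw [hΩ]; exact Set.inter_subset_right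
  -- ΓΔ is C² on S
  have hΓfun : ΓΔ = fun y : EuclideanSpace ℝ (Fin n) =>
      -∑ j, (Real.log (Δ + y j) + Real.log (Δ - y j)) := funext hΓΔ
  have hΓC : ContDiffOn ℝ 2 ΓΔ S := by
    intro y hy
    apply ContDiffAt.contDiffWithinAt
    rw [hΓfun]
    have hy' : ∀ j, -Δ < y j ∧ y j < Δ := by rw [hS] at hy; exact hy
    apply ContDiffAt.neg
    apply ContDiffAt.sum
    intro j _
    have hproj : ContDiffAt ℝ 2 (fun y : EuclideanSpace ℝ (Fin n) => y j) y :=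
      (EuclideanSpace.proj j : EuclideanSpace ℝ (Fin n) →L[ℝ] ℝ).contDiff.contDiffAt
    apply ContDiffAt.add
    · exact (Real.contDiffAt_log.mpr (by linarith [(hy' j).1] : Δ + y j ≠ 0)).comp y
        (contDiffAt_const.add hproj)
    · exact (Real.contDiffAt_log.mpr (by linarith [(hy' j).2] : Δ - y j ≠ 0)).comp y
        (contDiffAt_const.sub hproj)
  -- g is C² on W := U ∩ S
  have hWopen : IsOpen (U ∩ S) := hU.inter hSopen
  have hxW : x ∈ U ∩ S := ⟨hxU, hxS⟩
  have hgC : ContDiffOn ℝ 2 (fun y => f y + ΓΔ y) (U ∩ S) :=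
    (hf.mono Set.inter_subset_left).add (hΓC.mono Set.inter_subset_right)
  rw [aux_line hWopen hxW hgC v]
  -- neighborhoods along the line
  have hLc : Continuous (fun t : ℝ => x + t • v) := by continuity
  have hL0U : x + (0:ℝ) • v ∈ U := by simpa using hxU
  have hL0S : x + (0:ℝ) • v ∈ S := by simpa using hxS
  have hL0Ω : x + (0:ℝ) • v ∈ Ω := by simpa using hx
  have hNU : (fun t : ℝ => x + t • v) ⁻¹' U ∈ nhds (0:ℝ) :=
    hLc.continuousAt.preimage_mem_nhds (hU.mem_nhds hL0U)
  have hNS : (fun t : ℝ => x + t • v) ⁻¹' S ∈ nhds (0:ℝ) :=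
    hLc.continuousAt.preimage_mem_nhds (hSopen.mem_nhds hL0S)
  have hNΩ : (fun t : ℝ => x + t • v) ⁻¹' Ω ∈ nhds (0:ℝ) :=
    hLc.continuousAt.preimage_mem_nhds (hΩopen.mem_nhds hL0Ω)
  -- f part : first derivative along the line
  have hfline : ∀ t : ℝ, x + t • v ∈ U →
      HasDerivAt (fun s : ℝ => f (x + s • v)) (fderiv ℝ f (x + t • v) v) t := fun t ht =>
    aux_hasDerivAt_line ((hf.contDiffAt (hU.mem_nhds ht)).differentiableAt two_ne_zero)
  -- f part : second derivative at 0
  have hdf : HasDerivAt (deriv (fun t : ℝ => f (x + t • v))) (fderiv ℝ (fderiv ℝ f) x v v) 0 := by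
    apply (aux_hasDerivAt_line2 v (hf.contDiffAt (hU.mem_nhds hxU))).congr_of_eventuallyEq
    filter_upwards [hNU] with t ht
    exact (hfline t ht).deriv
  -- convexity gives nonnegativity
  have hmono : MonotoneOn (deriv (fun t : ℝ => f (x + t • v)))
      ((fun t : ℝ => x + t • v) ⁻¹' Ω) := by
    have hLmap : ((AffineMap.lineMap x (x + v) : ℝ →ᵃ[ℝ] EuclideanSpace ℝ (Fin n)) : ℝ →
        EuclideanSpace ℝ (Fin n)) = fun t : ℝ => x + t • v := by
      funext t
      simp [AffineMap.lineMap_apply, add_sub_cancel_left]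
      abel
    have hconv' := hconv.comp_affineMap (AffineMap.lineMap x (x + v))
    rw [hLmap] at hconv'
    have hdiff : ∀ t ∈ (fun t : ℝ => x + t • v) ⁻¹' Ω,
        DifferentiableAt ℝ (f ∘ fun t : ℝ => x + t • v) t := by
      intro t ht
      have : x + t • v ∈ U := hΩU ht
      simpa [Function.comp_def] using (hfline t this).differentiableAt
    have := hconv'.monotoneOn_deriv hdiff
    simpa [Function.comp_def] using this
  have hdf_nonneg : 0 ≤ fderiv ℝ (fderiv ℝ f) x v v := aux_deriv_nonneg hNΩ hmono hdf
  -- Γ part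
  have hcoord : ∀ (t : ℝ) (j : Fin n), (x + t • v) j = x j + t * v j := by
    intro t j; simp [PiLp.add_apply, PiLp.smul_apply, smul_eq_mul]
  have hφΓ : (fun t : ℝ => ΓΔ (x + t • v)) = fun t : ℝ =>
      -∑ j, (Real.log ((Δ + x j) + t * v j) + Real.log ((Δ - x j) - t * v j)) := by
    funext t
    rw [hΓΔ]
    congr 1
    apply Finset.sum_congr rfl
    intro j _
    rw [hcoord t j]
    congr 2 <;> ring
  have hposS : ∀ t : ℝ, x + t • v ∈ S →
      ∀ j, 0 < (Δ + x j) + t * v j ∧ 0 < (Δ - x j) - t * v j := by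
    intro t ht j
    rw [hS] at ht
    have h := ht j
    rw [hcoord t j] at h
    constructor <;> linarith [h.1, h.2]
  have hΓline : ∀ t : ℝ, x + t • v ∈ S →
      HasDerivAt (fun s : ℝ => ΓΔ (x + s • v))
        (-∑ j, (v j * ((Δ + x j) + t * v j)⁻¹ - v j * ((Δ - x j) - t * v j)⁻¹)) t := by
    intro t ht
    rw [hφΓ]
    apply HasDerivAt.neg
    apply HasDerivAt.fun_sum
    intro j _
    have hj := hposS t ht j
    have h1 : HasDerivAt (fun s : ℝ => (Δ + x j) + s * v j) (v j) t := by
      simpa using ((hasDerivAt_id t).mul_const (v j)).const_add (Δ + x j)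
    have h2 : HasDerivAt (fun s : ℝ => (Δ - x j) - s * v j) (-(v j)) t := by
      simpa using ((hasDerivAt_id t).mul_const (v j)).const_sub (Δ - x j)
    have hA : HasDerivAt (fun s : ℝ => Real.log ((Δ + x j) + s * v j))
        (((Δ + x j) + t * v j)⁻¹ * v j) t := by
      simpa [Function.comp_def] using (Real.hasDerivAt_log (ne_of_gt hj.1)).comp t h1
    have hB : HasDerivAt (fun s : ℝ => Real.log ((Δ - x j) - s * v j))
        (((Δ - x j) - t * v j)⁻¹ * -(v j)) t := by
      simpa [Function.comp_def] using (Real.hasDerivAt_log (ne_of_gt hj.2)).comp t h2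
    have := hA.fun_add hB
    convert this using 1
    ring
  have hx' : ∀ j, 0 < Δ + x j ∧ 0 < Δ - x j := by
    intro j
    rw [hS] at hxS
    have := hxS j
    constructor <;> linarith [this.1, this.2]
  have hΓ2 : HasDerivAt
      (fun t : ℝ => -∑ j, (v j * ((Δ + x j) + t * v j)⁻¹ - v j * ((Δ - x j) - t * v j)⁻¹))
      (∑ j, ((v j) ^ 2 / (Δ + x j) ^ 2 + (v j) ^ 2 / (Δ - x j) ^ 2)) 0 := by
    have H : ∀ j ∈ Finset.univ, HasDerivAt
        (fun t : ℝ => v j * ((Δ + x j) + t * v j)⁻¹ - v j * ((Δ - x j) - t * v j)⁻¹)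
        (-((v j) ^ 2 / (Δ + x j) ^ 2 + (v j) ^ 2 / (Δ - x j) ^ 2)) 0 := by
      intro j _
      have h1 : HasDerivAt (fun s : ℝ => (Δ + x j) + s * v j) (v j) 0 := by
        simpa using ((hasDerivAt_id (0:ℝ)).mul_const (v j)).const_add (Δ + x j)
      have h2 : HasDerivAt (fun s : ℝ => (Δ - x j) - s * v j) (-(v j)) 0 := by
        simpa using ((hasDerivAt_id (0:ℝ)).mul_const (v j)).const_sub (Δ - x j)
      have ha : (Δ + x j) + (0:ℝ) * v j ≠ 0 := by
        simpa using ne_of_gt (hx' j).1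
      have hb : (Δ - x j) - (0:ℝ) * v j ≠ 0 := by
        simpa using ne_of_gt (hx' j).2
      have hA := (h1.fun_inv ha).const_mul (v j)
      have hB := (h2.fun_inv hb).const_mul (v j)
      have := hA.fun_sub hB
      refine this.congr_deriv ?_
      simp only [zero_mul, add_zero, sub_zero]
      ring
    have := (HasDerivAt.fun_sum H).fun_neg
    rw [Finset.sum_neg_distrib, neg_neg] at this
    exact this
  have hΓd : HasDerivAt (deriv (fun t : ℝ => ΓΔ (x + t • v)))
      (∑ j, ((v j) ^ 2 / (Δ + x j) ^ 2 + (v j) ^ 2 / (Δ - x j) ^ 2)) 0 := by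
    apply hΓ2.congr_of_eventuallyEq
    filter_upwards [hNS] with t ht
    exact (hΓline t ht).deriv
  -- combine
  have hsum : deriv (deriv (fun t : ℝ => (fun y => f y + ΓΔ y) (x + t • v))) 0 =
      fderiv ℝ (fderiv ℝ f) x v v +
        ∑ j, ((v j) ^ 2 / (Δ + x j) ^ 2 + (v j) ^ 2 / (Δ - x j) ^ 2) := by
    have hev : deriv (fun t : ℝ => f (x + t • v) + ΓΔ (x + t • v)) =ᶠ[nhds (0:ℝ)]
        fun t => deriv (fun s : ℝ => f (x + s • v)) t + deriv (fun s : ℝ => ΓΔ (x + s • v)) t := by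
      filter_upwards [hNU, hNS] with t htU htS
      have h1 := hfline t htU
      have h2 := hΓline t htS
      rw [(h1.fun_add h2).deriv, h1.deriv, h2.deriv]
    have : deriv (fun t : ℝ => (fun y => f y + ΓΔ y) (x + t • v)) =
        deriv (fun t : ℝ => f (x + t • v) + ΓΔ (x + t • v)) := rfl
    rw [this, hev.deriv_eq]
    exact (hdf.add hΓd).deriv
  rw [hsum]
  -- final inequality
  have hnorm : ‖v‖ ^ 2 = ∑ j, (v j) ^ 2 := by
    rw [EuclideanSpace.norm_eq, Real.sq_sqrt (by positivity)]
    simp [Real.norm_eq_abs, sq_abs]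
  have hkey : ∀ j : Fin n, 2 / Δ ^ 2 * (v j) ^ 2 ≤
      (v j) ^ 2 / (Δ + x j) ^ 2 + (v j) ^ 2 / (Δ - x j) ^ 2 := by
    intro j
    have ha := (hx' j).1
    have hb := (hx' j).2
    have h1 : 2 / Δ ^ 2 ≤ 1 / (Δ + x j) ^ 2 + 1 / (Δ - x j) ^ 2 := by
      rw [div_add_div _ _ (by positivity) (by positivity),
        div_le_div_iff₀ (by positivity) (by positivity)]
      nlinarith [mul_pos ha hb, sq_nonneg (x j), sq_nonneg (x j * x j), sq_nonneg (Δ * x j)]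
    calc 2 / Δ ^ 2 * (v j) ^ 2 ≤ (1 / (Δ + x j) ^ 2 + 1 / (Δ - x j) ^ 2) * (v j) ^ 2 :=
          mul_le_mul_of_nonneg_right h1 (sq_nonneg _)
      _ = (v j) ^ 2 / (Δ + x j) ^ 2 + (v j) ^ 2 / (Δ - x j) ^ 2 := by ring
  calc 2 / Δ ^ 2 * ‖v‖ ^ 2 = ∑ j, 2 / Δ ^ 2 * (v j) ^ 2 := by rw [hnorm, Finset.mul_sum]
    _ ≤ ∑ j, ((v j) ^ 2 / (Δ + x j) ^ 2 + (v j) ^ 2 / (Δ - x j) ^ 2) :=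
        Finset.sum_le_sum fun j _ => hkey j
    _ ≤ fderiv ℝ (fderiv ℝ f) x v v +
        ∑ j, ((v j) ^ 2 / (Δ + x j) ^ 2 + (v j) ^ 2 / (Δ - x j) ^ 2) := by linarith
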